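/- Let K_B > 0, m₂ > 0, u₁, u₂ ∈ ℝ³, T₁, T₂ > 0, and v ∈ ℝ³ be fixed, and for r > 0 set m₁ = m₂/r, a₂₁(r) = 1/(1+r), b₂₁(r) = 2r/(1+r)², γ₂₁(r) = m₂/(3(1+r)²), u₂₁(r) = (1−a₂₁(r)) u₂ + a₂₁(r) u₁, T₂₁(r) = (1−b₂₁(r)) T₂ + b₂₁(r) T₁ + (γ₂₁(r)/K_B)|u₁−u₂|², and M(v;a,b) = (2πb)^{−3/2} exp(−|v−a|²/(2b)). Then as r → 0⁺, M(v; u₂₁(r), K_B T₂₁(r)/m₂) → M(v; u₁, K_B T₂/m₂ + |u₁−u₂|²/3); that is, in the light-mass limit the light-species cross Maxwellian M₂₁ tends to a Maxwellian centered at the heavy gas's velocity u₁ with variance parameter K_B T₂/m₂ + (1/3)|u₁−u₂|². -/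

import Mathlib

open Filter Topology

theorem bbgsp_light_cross_maxwellian_light_mass_limit
    (KB m2 : ℝ) (hKB : 0 < KB) (hm2 : 0 < m2)
    (u1 u2 : EuclideanSpace ℝ (Fin 3)) (T1 T2 : ℝ) (hT1 : 0 < T1) (hT2 : 0 < T2)
    (v : EuclideanSpace ℝ (Fin 3))
    (Mx : EuclideanSpace ℝ (Fin 3) → EuclideanSpace ℝ (Fin 3) → ℝ → ℝ)
    (hMx : ∀ w c d, Mx w c d = (2 * Real.pi * d) ^ (-(3 : ℝ) / 2)
      * Real.exp (-‖w - c‖ ^ 2 / (2 * d)))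
    (a21 b21 γ21 : ℝ → ℝ) (u21 : ℝ → EuclideanSpace ℝ (Fin 3)) (T21 : ℝ → ℝ)
    (ha21 : ∀ r, a21 r = 1 / (1 + r))
    (hb21 : ∀ r, b21 r = 2 * r / (1 + r) ^ 2)
    (hγ21 : ∀ r, γ21 r = m2 / (3 * (1 + r) ^ 2))
    (hu21 : ∀ r, u21 r = (1 - a21 r) • u2 + a21 r • u1)
    (hT21 : ∀ r, T21 r = (1 - b21 r) * T2 + b21 r * T1 + γ21 r / KB * ‖u1 - u2‖ ^ 2) :
    Tendsto (fun r : ℝ => Mx v (u21 r) (KB * T21 r / m2)) (𝓝[>] 0)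
      (𝓝 (Mx v u1 (KB * T2 / m2 + ‖u1 - u2‖ ^ 2 / 3))) := by
  set L : ℝ := KB * T2 / m2 + ‖u1 - u2‖ ^ 2 / 3 with hL
  have hLpos : 0 < L := by
    rw [hL]; positivity
  -- r tends to 0
  have hr : Tendsto (fun r : ℝ => r) (𝓝[>] (0:ℝ)) (𝓝 0) :=
    tendsto_id.mono_left nhdsWithin_le_nhds
  have hden : Tendsto (fun r : ℝ => (1 + r) ^ 2) (𝓝[>] (0:ℝ)) (𝓝 1) := by
    have : Tendsto (fun r : ℝ => 1 + r) (𝓝[>] (0:ℝ)) (𝓝 1) := by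
      simpa using tendsto_const_nhds.add hr
    simpa using this.pow 2
  have h1r : Tendsto (fun r : ℝ => 1 + r) (𝓝[>] (0:ℝ)) (𝓝 1) := by
    simpa using tendsto_const_nhds.add hr
  have hb : Tendsto b21 (𝓝[>] (0:ℝ)) (𝓝 0) := by
    have h2 : Tendsto (fun r : ℝ => 2 * r / (1 + r) ^ 2) (𝓝[>] (0:ℝ)) (𝓝 (2 * 0 / 1)) :=
      Tendsto.div ((tendsto_const_nhds (x := (2:ℝ))).mul hr) hden one_ne_zero
    rw [funext hb21]
    simpa using h2
  have hg : Tendsto γ21 (𝓝[>] (0:ℝ)) (𝓝 (m2 / 3)) := by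
    have h2 : Tendsto (fun r : ℝ => m2 / (3 * (1 + r) ^ 2)) (𝓝[>] (0:ℝ)) (𝓝 (m2 / (3 * 1))) :=
      Tendsto.div (tendsto_const_nhds (x := m2)) (hden.const_mul 3) (by norm_num)
    rw [funext hγ21]
    simpa using h2
  have ha : Tendsto a21 (𝓝[>] (0:ℝ)) (𝓝 1) := by
    have h2 : Tendsto (fun r : ℝ => 1 / (1 + r)) (𝓝[>] (0:ℝ)) (𝓝 (1 / 1)) :=
      Tendsto.div (tendsto_const_nhds (x := (1:ℝ))) h1r one_ne_zero
    rw [funext ha21]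
    simpa using h2
  have hT : Tendsto T21 (𝓝[>] (0:ℝ)) (𝓝 (T2 + m2 / 3 / KB * ‖u1 - u2‖ ^ 2)) := by
    have h2 : Tendsto (fun r : ℝ => (1 - b21 r) * T2 + b21 r * T1 + γ21 r / KB * ‖u1 - u2‖ ^ 2)
        (𝓝[>] (0:ℝ)) (𝓝 ((1 - 0) * T2 + 0 * T1 + m2 / 3 / KB * ‖u1 - u2‖ ^ 2)) :=
      ((((tendsto_const_nhds (x := (1:ℝ))).sub hb).mul tendsto_const_nhds).add
        (hb.mul tendsto_const_nhds)).add ((hg.div_const KB).mul tendsto_const_nhds)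
    rw [funext hT21]
    simpa using h2
  have hd : Tendsto (fun r => KB * T21 r / m2) (𝓝[>] (0:ℝ)) (𝓝 L) := by
    have := (hT.const_mul KB).div_const m2
    have heq : KB * (T2 + m2 / 3 / KB * ‖u1 - u2‖ ^ 2) / m2 = L := by
      field_simp [hL]; rw [hL]; field_simp
    rwa [heq] at this
  have hu : Tendsto u21 (𝓝[>] (0:ℝ)) (𝓝 u1) := by
    have h2 : Tendsto (fun r : ℝ => (1 - a21 r) • u2 + a21 r • u1)
        (𝓝[>] (0:ℝ)) (𝓝 (((1:ℝ) - 1) • u2 + (1:ℝ) • u1)) :=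
      (((tendsto_const_nhds (x := (1:ℝ))).sub ha).smul tendsto_const_nhds).add
        (ha.smul tendsto_const_nhds)
    rw [funext hu21]
    simpa using h2
  simp only [hMx]
  have h2L : (0:ℝ) < 2 * Real.pi * L := by positivity
  have hpow : Tendsto (fun r => (2 * Real.pi * (KB * T21 r / m2)) ^ (-(3:ℝ)/2))
      (𝓝[>] (0:ℝ)) (𝓝 ((2 * Real.pi * L) ^ (-(3:ℝ)/2))) :=
    (hd.const_mul (2 * Real.pi)).rpow_const (Or.inl h2L.ne')
  have hnorm : Tendsto (fun r => -‖v - u21 r‖ ^ 2 / (2 * (KB * T21 r / m2)))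
      (𝓝[>] (0:ℝ)) (𝓝 (-‖v - u1‖ ^ 2 / (2 * L))) := by
    have h1 : Tendsto (fun r => ‖v - u21 r‖) (𝓝[>] (0:ℝ)) (𝓝 ‖v - u1‖) :=
      (continuous_norm.tendsto _).comp (tendsto_const_nhds.sub hu)
    exact ((h1.pow 2).neg).div (hd.const_mul 2) (by positivity)
  exact hpow.mul ((Real.continuous_exp.tendsto _).comp hnorm)
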